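/- The bound cub(G) ≤ ⌈log₂ n⌉ · box(G) is tight: for every n with n ≠ 2^k + 1 for all k, the star graph S(n) on n vertices satisfies box(S(n)) = 1 and cub(S(n)) = ⌈log₂ n⌉. -/

import Mathlib

/-- A graph is an interval graph. -/
def IsIntervalGraph {V : Type*} (G : SimpleGraph V) : Prop :=
  ∃ l r : V → ℝ, ∀ u v : V, u ≠ v →
    (G.Adj u v ↔ (Set.Icc (l u) (r u) ∩ Set.Icc (l v) (r v)).Nonempty)

/-- A graph is an indifference (unit interval) graph. -/
def IsIndifferenceGraph {V : Type*} (G : SimpleGraph V) : Prop :=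
  ∃ l : V → ℝ, ∀ u v : V, u ≠ v →
    (G.Adj u v ↔ (Set.Icc (l u) (l u + 1) ∩ Set.Icc (l v) (l v + 1)).Nonempty)

/-- Boxicity. -/
noncomputable def boxicity {V : Type*} (G : SimpleGraph V) : ℕ :=
  sInf {b : ℕ | ∃ I : Fin b → SimpleGraph V,
    (∀ i, IsIntervalGraph (I i)) ∧ ∀ u v : V, G.Adj u v ↔ ∀ i, (I i).Adj u v}

/-- Cubicity. -/
noncomputable def cubicity {V : Type*} (G : SimpleGraph V) : ℕ :=
  sInf {b : ℕ | ∃ I : Fin b → SimpleGraph V,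
    (∀ i, IsIndifferenceGraph (I i)) ∧ ∀ u v : V, G.Adj u v ↔ ∀ i, (I i).Adj u v}

/-- The star S(n) = K_{1,n-1} on vertex set Fin n: vertex 0 is the center,
adjacent to all other vertices, and there are no other edges. -/
def starGraph (n : ℕ) : SimpleGraph (Fin n) where
  Adj u v := u ≠ v ∧ ((u : ℕ) = 0 ∨ (v : ℕ) = 0)
  symm := by
    constructor
    intro u v h
    exact ⟨h.1.symm, h.2.symm⟩
  loopless := by
    constructor
    intro u h
    exact h.1 rfl

lemma icc_inter_nonempty (a c : ℝ) :
    (Set.Icc a (a+1) ∩ Set.Icc c (c+1)).Nonempty ↔ |a - c| ≤ 1 := by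
  rw [Set.Icc_inter_Icc, Set.nonempty_Icc, max_le_iff, le_min_iff, le_min_iff, abs_sub_le_iff]
  constructor
  · rintro ⟨⟨_, h1⟩, h2, _⟩; exact ⟨by linarith, by linarith⟩
  · rintro ⟨h1, h2⟩; exact ⟨⟨by linarith, by linarith⟩, by linarith, by linarith⟩

lemma exists_testBit_ne {a b d : ℕ} (ha : a < 2^d) (hb : b < 2^d) (hab : a ≠ b) :
    ∃ i, i < d ∧ a.testBit i ≠ b.testBit i := by
  by_contra h
  push_neg at h
  apply hab
  apply Nat.eq_of_testBit_eq
  intro i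
  by_cases hi : i < d
  · exact h i hi
  · rw [Nat.testBit_eq_false_of_lt (lt_of_lt_of_le ha (Nat.pow_le_pow_right (by norm_num) (le_of_not_gt hi))),
      Nat.testBit_eq_false_of_lt (lt_of_lt_of_le hb (Nat.pow_le_pow_right (by norm_num) (le_of_not_gt hi)))]

lemma same_side {x y c : ℝ} (hx : |x - c| ≤ 1) (hy : |y - c| ≤ 1)
    (h : (x < c) ↔ (y < c)) : |x - y| ≤ 1 := by
  rw [abs_sub_le_iff] at *
  by_cases hxc : x < c
  · have hyc : y < c := h.1 hxc
    exact ⟨by linarith, by linarith⟩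
  · have hyc : ¬ y < c := fun hy' => hxc (h.2 hy')
    push_neg at hyc
    push_neg at hxc
    exact ⟨by linarith, by linarith⟩


/-- tightness — if n ≥ 3 is not of the form 2^k + 1, then
box(S(n)) = 1 and cub(S(n)) = ⌈log₂ n⌉. -/
theorem stmt14 (n : ℕ) (hn : 3 ≤ n) (h2 : ∀ k : ℕ, n ≠ 2 ^ k + 1) :
    boxicity (starGraph n) = 1 ∧ cubicity (starGraph n) = Nat.clog 2 n := by
  constructor
  · -- boxicity = 1
    have hstar_interval : IsIntervalGraph (starGraph n) := by
      refine ⟨fun v => if (v : ℕ) = 0 then (0:ℝ) else (v : ℕ),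
              fun v => if (v : ℕ) = 0 then (n:ℝ) else (v : ℕ), ?_⟩
      intro u v huv
      have hne : (u : ℕ) ≠ (v : ℕ) := fun h => huv (Fin.ext h)
      rw [show (starGraph n).Adj u v ↔ (u ≠ v ∧ ((u : ℕ) = 0 ∨ (v : ℕ) = 0)) from Iff.rfl]
      beta_reduce
      by_cases hu : (u : ℕ) = 0
      · by_cases hv : (v : ℕ) = 0
        · exact absurd (hu.trans hv.symm) hne
        · rw [if_pos hu, if_pos hu, if_neg hv, if_neg hv]
          constructor
          · intro _
            exact ⟨(v : ℕ), ⟨by positivity, by exact_mod_cast v.isLt.le⟩, le_refl _, le_refl _⟩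
          · intro _
            exact ⟨huv, Or.inl hu⟩
      · by_cases hv : (v : ℕ) = 0
        · rw [if_neg hu, if_neg hu, if_pos hv, if_pos hv]
          constructor
          · intro _
            exact ⟨(u : ℕ), ⟨le_refl _, le_refl _⟩, by positivity, by exact_mod_cast u.isLt.le⟩
          · intro _
            exact ⟨huv, Or.inr hv⟩
        · rw [if_neg hu, if_neg hu, if_neg hv, if_neg hv]
          constructor
          · rintro ⟨_, h | h⟩
            · exact absurd h hu
            · exact absurd h hv
          · rintro ⟨x, ⟨h1, h2⟩, h3, h4⟩
            exfalso
            have hcast : ((u : ℕ) : ℝ) ≠ ((v : ℕ) : ℝ) := by exact_mod_cast hne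
            exact hcast ((le_antisymm h2 h1) ▸ (le_antisymm h4 h3))
    have mem1 : 1 ∈ {b : ℕ | ∃ I : Fin b → SimpleGraph (Fin n),
        (∀ i, IsIntervalGraph (I i)) ∧ ∀ u v, (starGraph n).Adj u v ↔ ∀ i, (I i).Adj u v} := by
      refine ⟨fun _ => starGraph n, fun _ => hstar_interval, fun u v => ?_⟩
      exact ⟨fun h _ => h, fun h => h 0⟩
    refine le_antisymm (Nat.sInf_le mem1) ?_
    rw [Nat.one_le_iff_ne_zero]
    intro h0
    rcases Nat.sInf_eq_zero.mp h0 with h | h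
    · obtain ⟨I, -, hI⟩ := h
      have := (hI ⟨0, by omega⟩ ⟨0, by omega⟩).mpr (fun i => i.elim0)
      exact this.1 rfl
    · rw [h] at mem1
      exact mem1
  · -- cubicity = clog 2 n
    set d := Nat.clog 2 n with hd
    have hnd : n ≤ 2 ^ d := Nat.le_pow_clog (by norm_num) n
    have hd1 : 0 < d := by
      rw [hd, Nat.lt_clog_iff_pow_lt (by norm_num)]
      omega
    -- the coordinate functions
    set L : Fin d → Fin n → ℝ := fun i v =>
      if (v : ℕ) = 0 then 1 else (if Nat.testBit ((v : ℕ) - 1) i then 2 else 0) with hL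
    have memd : d ∈ {b : ℕ | ∃ I : Fin b → SimpleGraph (Fin n),
        (∀ i, IsIndifferenceGraph (I i)) ∧ ∀ u v, (starGraph n).Adj u v ↔ ∀ i, (I i).Adj u v} := by
      refine ⟨fun i => ⟨fun u v => u ≠ v ∧ |L i u - L i v| ≤ 1,
        ⟨fun u v h => ⟨h.1.symm, by rw [abs_sub_comm]; exact h.2⟩⟩,
        ⟨fun v h => h.1 rfl⟩⟩, ?_, ?_⟩
      · intro i
        refine ⟨L i, fun u v huv => ?_⟩
        rw [icc_inter_nonempty]
        exact ⟨fun h => h.2, fun h => ⟨huv, h⟩⟩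
      · intro u v
        constructor
        · rintro ⟨huv, hc⟩ i
          refine ⟨huv, ?_⟩
          rcases hc with hu | hv
          · have hv0 : (v : ℕ) ≠ 0 := fun h =>
              huv (Fin.ext (by omega))
            simp only [hL, hu, if_pos, if_true, if_neg hv0]
            by_cases ht : Nat.testBit ((v : ℕ) - 1) i <;> simp [ht] <;> norm_num
          · have hu0 : (u : ℕ) ≠ 0 := fun h =>
              huv (Fin.ext (by omega))
            simp only [hL, hv, if_pos, if_true, if_neg hu0]
            by_cases ht : Nat.testBit ((u : ℕ) - 1) i <;> simp [ht] <;> norm_num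
        · intro h
          by_cases huv : u = v
          · exact absurd (h ⟨0, hd1⟩).1 (by simp [huv])
          refine ⟨huv, ?_⟩
          by_contra hc
          push_neg at hc
          obtain ⟨hu0, hv0⟩ := hc
          have hun := u.isLt
          have hvn := v.isLt
          obtain ⟨i, hid, hbit⟩ := exists_testBit_ne
            (show (u : ℕ) - 1 < 2 ^ d by omega) (show (v : ℕ) - 1 < 2 ^ d by omega)
            (show (u : ℕ) - 1 ≠ (v : ℕ) - 1 by
              have : (u : ℕ) ≠ (v : ℕ) := fun h => huv (Fin.ext h); omega)
          have hthis := (h ⟨i, hid⟩).2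
          simp only [hL, if_neg hu0, if_neg hv0] at hthis
          rcases Bool.eq_false_or_eq_true (Nat.testBit ((u : ℕ) - 1) i) with h1 | h1 <;>
          rcases Bool.eq_false_or_eq_true (Nat.testBit ((v : ℕ) - 1) i) with hb2 | hb2
          · exact hbit (h1.trans hb2.symm)
          · rw [h1, hb2] at hthis
            norm_num at hthis
          · rw [h1, hb2] at hthis
            norm_num at hthis
          · exact hbit (h1.trans hb2.symm)
    refine le_antisymm (Nat.sInf_le memd) (le_csInf ⟨d, memd⟩ ?_)
    rintro b ⟨I, hind, hint⟩
    choose l hl using hind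
    set c0 : Fin n := ⟨0, by omega⟩ with hc0
    have key : n - 1 ≤ 2 ^ b := by
      have hinj : Function.Injective
          (fun (j : Fin (n-1)) (i : Fin b) => decide (l i ⟨(j : ℕ) + 1, by omega⟩ < l i c0)) := by
        intro j j' hff
        by_contra hne
        set u : Fin n := ⟨(j : ℕ) + 1, by omega⟩ with hu
        set v : Fin n := ⟨(j' : ℕ) + 1, by omega⟩ with hv
        have huv : u ≠ v := by
          intro h
          apply hne
          apply Fin.ext
          have : (u : ℕ) = (v : ℕ) := by rw [h]
          simpa [hu, hv] using this
        have hcu : c0 ≠ u := by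
          rw [hc0, hu]; intro h; rw [Fin.mk.injEq] at h; omega
        have hcv : c0 ≠ v := by
          rw [hc0, hv]; intro h; rw [Fin.mk.injEq] at h; omega
        have hadju : ∀ i, (I i).Adj c0 u := (hint c0 u).mp ⟨hcu, Or.inl rfl⟩
        have hadjv : ∀ i, (I i).Adj c0 v := (hint c0 v).mp ⟨hcv, Or.inl rfl⟩
        have hall : ∀ i, (I i).Adj u v := by
          intro i
          have h1 : |l i u - l i c0| ≤ 1 := by
            have := (hl i c0 u hcu).mp (hadju i)
            rw [icc_inter_nonempty] at this
            rwa [abs_sub_comm] at this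
          have h2 : |l i v - l i c0| ≤ 1 := by
            have := (hl i c0 v hcv).mp (hadjv i)
            rw [icc_inter_nonempty] at this
            rwa [abs_sub_comm] at this
          have hside : (l i u < l i c0) ↔ (l i v < l i c0) := by
            have := congrFun hff i
            simpa [decide_eq_decide] using this
          have := same_side h1 h2 hside
          exact (hl i u v huv).mpr ((icc_inter_nonempty _ _).mpr this)
        have := (hint u v).mpr hall
        rcases this.2 with h | h
        · rw [hu] at h; simp at h
        · rw [hv] at h; simp at h
      calc n - 1 = Fintype.card (Fin (n-1)) := by simp
        _ ≤ Fintype.card (Fin b → Bool) := Fintype.card_le_of_injective _ hinj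
        _ = 2 ^ b := by simp
    have hnb : n ≤ 2 ^ b := by
      rcases Nat.lt_or_ge n (2 ^ b + 1) with h | h
      · omega
      · exact absurd (by omega : n = 2 ^ b + 1) (h2 b)
    exact (Nat.clog_le_iff_le_pow (by norm_num)).mpr hnb
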